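/- Let R be a finite commutative local ring with |R| = q^n, R/J(R) a field of odd order q, and let u ∈ R^* be a square, u = s^2. Then the real characteristic polynomial of the product matrix A_u(R) is -λ^{q^{n-1}}(λ-1)^{(q^n-q^{n-1}+2)/2}(λ+1)^{(q^n-q^{n-1}-2)/2}. -/

import Mathlib

open Matrix

lemma invDet : ∀ (n : ℕ) (α : Type*) [Fintype α] [DecidableEq α],
    Fintype.card α = n → ∀ (σ : α → α), Function.Involutive σ → ∀ lam : ℝ,
    ∃ T : ℕ, n = Fintype.card {x // σ x = x} + 2 * T ∧
      (Matrix.of fun x y : α =>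
          (if y = σ x then (1:ℝ) else 0) - (if x = y then lam else 0)).det =
        (1 - lam) ^ (Fintype.card {x // σ x = x}) * (lam ^ 2 - 1) ^ T := by
  intro n
  induction n using Nat.strong_induction_on with
  | _ n IH =>
  intro α _ _ hcard σ hσ lam
  rcases isEmpty_or_nonempty α with hα | ⟨⟨a⟩⟩
  · exact ⟨0, by simp [← hcard], by simp [Matrix.det_isEmpty]⟩
  by_cases h : σ a = a
  · -- fixed point case
    have hne : ∀ x : {x : α // ¬ x = a}, ¬ σ x.1 = a := by
      intro x hx
      exact x.2 (hσ.injective (by rw [hx, h]))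
    set σ' : {x : α // ¬ x = a} → {x : α // ¬ x = a} :=
      fun x => ⟨σ x.1, hne x⟩ with hσ'def
    have hσ' : Function.Involutive σ' := fun x => Subtype.ext (hσ x.1)
    have hn1 : 0 < n := hcard ▸ Fintype.card_pos_iff.2 ⟨a⟩
    have hcardβ : Fintype.card {x : α // ¬ x = a} = n - 1 := by
      rw [Fintype.card_subtype_compl, Fintype.card_subtype_eq, hcard]
    obtain ⟨T, hT, hdet⟩ := IH (n-1) (by omega) _ hcardβ σ' hσ' lam
    have eFix : {x : α // σ x = x} ≃ Option {x // σ' x = x} :=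
    { toFun := fun z => if hz : z.1 = a then none else
        some ⟨⟨z.1, hz⟩, Subtype.ext z.2⟩
      invFun := fun o => o.elim ⟨a, h⟩ (fun w => ⟨w.1.1, congrArg Subtype.val w.2⟩)
      left_inv := by
        rintro ⟨z, hz⟩
        by_cases hza : z = a
        · subst hza; simp
        · simp [hza]
      right_inv := by
        rintro (_ | ⟨⟨z, hz⟩, hz2⟩)
        · simp
        · simp [hz] }
    have hF : Fintype.card {x : α // σ x = x}
        = Fintype.card {x // σ' x = x} + 1 := by
      rw [Fintype.card_congr eFix, Fintype.card_option]
    haveI : Unique {x : α // x = a} :=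
      ⟨⟨⟨a, rfl⟩⟩, by rintro ⟨x, rfl⟩; rfl⟩
    have hsub : (Matrix.of fun x y : α =>
          (if y = σ x then (1:ℝ) else 0) - (if x = y then lam else 0)).submatrix
            (Equiv.sumCompl (fun x : α => x = a)) (Equiv.sumCompl (fun x : α => x = a))
        = Matrix.fromBlocks (Matrix.of fun _ _ : {x : α // x = a} => 1 - lam) 0
            (Matrix.of fun (i : {x : α // ¬ x = a}) (j : {x : α // x = a}) =>
              (if (j : α) = σ i then (1:ℝ) else 0) - (if (i : α) = j then lam else 0))
            (Matrix.of fun x y : {x : α // ¬ x = a} =>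
              (if y = σ' x then (1:ℝ) else 0) - (if x = y then lam else 0)) := by
      ext i j
      cases i with
      | inl i =>
        cases j with
        | inl j =>
          rcases i with ⟨i, rfl⟩; rcases j with ⟨j, hj⟩
          simp [hj, h]
        | inr j =>
          rcases i with ⟨i, rfl⟩
          have h1 : ¬ (j : α) = σ i := by rw [h]; exact j.2
          have h2 : ¬ i = (j : α) := fun hc => j.2 hc.symm
          simp [h1, h2]
      | inr i =>
        cases j with
        | inl j => simp
        | inr j => simp [hσ'def, Subtype.ext_iff]
    refine ⟨T, by omega, ?_⟩
    rw [← Matrix.det_submatrix_equiv_self (Equiv.sumCompl (fun x : α => x = a)), hsub,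
      Matrix.det_fromBlocks_zero₁₂, Matrix.det_unique, hdet, hF]
    simp only [Matrix.of_apply, pow_succ]
    ring
  · -- pair case
    have hba : σ (σ a) = a := hσ a
    have hab : ¬ a = σ a := fun e => h e.symm
    set p : α → Prop := fun x => x = a ∨ x = σ a with hp
    have hnp : ∀ x : {x : α // ¬ p x}, ¬ p (σ x.1) := by
      rintro ⟨x, hx⟩ (hc | hc)
      · exact hx (Or.inr (hσ.injective (by rw [hc, hba])))
      · exact hx (Or.inl (hσ.injective hc))
    set σ' : {x : α // ¬ p x} → {x : α // ¬ p x} :=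
      fun x => ⟨σ x.1, hnp x⟩ with hσ'def
    have hσ' : Function.Involutive σ' := fun x => Subtype.ext (hσ x.1)
    let e2 : Fin 2 ≃ {x : α // p x} :=
    { toFun := ![⟨a, Or.inl rfl⟩, ⟨σ a, Or.inr rfl⟩]
      invFun := fun z => if z.1 = a then 0 else 1
      left_inv := by
        intro i
        fin_cases i
        · simp
        · simp [h]
      right_inv := by
        rintro ⟨z, (rfl | rfl)⟩
        · simp
        · simp [h] }
    have hcardp : Fintype.card {x : α // p x} = 2 := by
      rw [← Fintype.card_congr e2, Fintype.card_fin]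
    have hn2 : 2 ≤ n := by
      rw [← hcard]
      have : Nontrivial α := ⟨a, σ a, hab⟩
      exact Fintype.one_lt_card
    have hcardβ : Fintype.card {x : α // ¬ p x} = n - 2 := by
      rw [Fintype.card_subtype_compl, hcardp, hcard]
    obtain ⟨T, hT, hdet⟩ := IH (n-2) (by omega) _ hcardβ σ' hσ' lam
    have eFix : {x : α // σ x = x} ≃ {x // σ' x = x} :=
    { toFun := fun z => ⟨⟨z.1, by
        rintro (hc | hc)
        · exact h (by rw [← hc]; exact z.2)
        · have hz := z.2
          rw [hc] at hz
          exact hab (hba.symm.trans hz)⟩, Subtype.ext z.2⟩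
      invFun := fun w => ⟨w.1.1, congrArg Subtype.val w.2⟩
      left_inv := fun z => rfl
      right_inv := fun w => rfl }
    have hF : Fintype.card {x : α // σ x = x}
        = Fintype.card {x // σ' x = x} := Fintype.card_congr eFix
    have hsub : (Matrix.of fun x y : α =>
          (if y = σ x then (1:ℝ) else 0) - (if x = y then lam else 0)).submatrix
            (Equiv.sumCompl p) (Equiv.sumCompl p)
        = Matrix.fromBlocks
            (Matrix.of fun i j : {x : α // p x} =>
              (if (j : α) = σ i then (1:ℝ) else 0) - (if (i : α) = j then lam else 0)) 0
            (Matrix.of fun (i : {x : α // ¬ p x}) (j : {x : α // p x}) =>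
              (if (j : α) = σ i then (1:ℝ) else 0) - (if (i : α) = j then lam else 0))
            (Matrix.of fun x y : {x : α // ¬ p x} =>
              (if y = σ' x then (1:ℝ) else 0) - (if x = y then lam else 0)) := by
      ext i j
      cases i with
      | inl i =>
        cases j with
        | inl j => simp
        | inr j =>
          have h1 : ¬ (j : α) = σ i := by
            intro e
            apply j.2
            rcases i.2 with hc | hc
            · exact Or.inr (by rw [e, hc])
            · exact Or.inl (by rw [e, hc, hba])
          have h2 : ¬ (i : α) = (j : α) := fun e => j.2 (e ▸ i.2)
          simp [h1, h2]
      | inr i =>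
        cases j with
        | inl j =>
          have h1 : ¬ (j : α) = σ i := fun e => (hnp i) (e ▸ j.2)
          have h2 : ¬ (i : α) = (j : α) := fun e => i.2 (e.symm ▸ j.2)
          simp [h1, h2]
        | inr j => simp [hσ'def, Subtype.ext_iff]
    have hB : (Matrix.of fun i j : {x : α // p x} =>
        (if (j : α) = σ i then (1:ℝ) else 0) - (if (i : α) = j then lam else 0)).det
        = lam ^ 2 - 1 := by
      rw [← Matrix.det_submatrix_equiv_self e2]
      have hBe : (Matrix.of fun i j : {x : α // p x} =>
          (if (j : α) = σ i then (1:ℝ) else 0)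
            - (if (i : α) = j then lam else 0)).submatrix e2 e2
          = !![-lam, 1; 1, -lam] := by
        ext i j
        fin_cases i <;> fin_cases j <;> simp [e2, hba, h, hab]
      rw [hBe, Matrix.det_fin_two_of]
      ring
    refine ⟨T + 1, by omega, ?_⟩
    rw [← Matrix.det_submatrix_equiv_self (Equiv.sumCompl p), hsub,
      Matrix.det_fromBlocks_zero₁₂, hB, hdet, hF]
    ring

theorem charpoly_unit_square_odd {R : Type*} [CommRing R] [Fintype R] [DecidableEq R]
    [IsLocalRing R] (q n : ℕ) (hn : 0 < n) (hq : Odd q)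
    (hcard : Fintype.card R = q ^ n)
    (hres : Nat.card (R ⧸ (⊥ : Ideal R).jacobson) = q)
    (u s : R) (hu : IsUnit u) (hs : u = s ^ 2) :
    ∀ lam : ℝ,
      ((Matrix.of fun x y : R => if x * y = u then (1 : ℝ) else 0) - lam • 1).det =
        -lam ^ (q ^ (n - 1)) * (lam - 1) ^ ((q ^ n - q ^ (n - 1) + 2) / 2) *
          (lam + 1) ^ ((q ^ n - q ^ (n - 1) - 2) / 2) := by
  intro lam
  classical
  -- residue field facts
  have hjac : (⊥ : Ideal R).jacobson = IsLocalRing.maximalIdeal R :=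
    IsLocalRing.jacobson_eq_maximalIdeal ⊥ bot_ne_top
  rw [hjac] at hres
  set m := IsLocalRing.maximalIdeal R with hm
  have hq0 : q ≠ 0 := by rintro rfl; simpa using hq
  -- 2 is a unit
  have h2 : IsUnit (2 : R) := by
    by_contra h2
    have h2m : (2 : R) ∈ m := (IsLocalRing.mem_maximalIdeal _).mpr h2
    letI : Field (R ⧸ m) := Ideal.Quotient.field m
    have hz : (2 : R ⧸ m) = 0 := by
      have : (Ideal.Quotient.mk m) (2 : R) = 0 := Ideal.Quotient.eq_zero_iff_mem.mpr h2m
      exact (map_ofNat (Ideal.Quotient.mk m) 2).symm.trans this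
    haveI : Fintype (R ⧸ m) := Fintype.ofFinite _
    have hq0' : ((q : ℕ) : R ⧸ m) = 0 := by
      have := Nat.cast_card_eq_zero (R ⧸ m)
      rwa [← Nat.card_eq_fintype_card, hres] at this
    obtain ⟨k, hk⟩ := hq
    rw [hk] at hq0'
    push_cast at hq0'
    rw [hz] at hq0'
    simp at hq0'
  -- cardinalities
  have hcardm : Nat.card m = q ^ (n - 1) := by
    have hh := Submodule.card_eq_card_quotient_mul_card (m : Submodule R R)
    rw [Nat.card_eq_fintype_card, hcard, hres] at hh
    have hpow : q ^ n = q * q ^ (n - 1) := by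
      conv_lhs => rw [show n = 1 + (n - 1) by omega, pow_add, pow_one]
    rw [hpow] at hh
    have hh2 : q ^ (n - 1) * q = Nat.card m * q := by rw [← hh]; ring
    exact (Nat.eq_of_mul_eq_mul_right (Nat.pos_of_ne_zero hq0) hh2).symm
  have hNU : Fintype.card {x : R // ¬ IsUnit x} = q ^ (n - 1) := by
    have e : {x : R // ¬ IsUnit x} ≃ {x : R // x ∈ m} :=
      Equiv.subtypeEquivRight (fun x => by
        rw [hm, IsLocalRing.mem_maximalIdeal]; exact (mem_nonunits_iff).symm)
    rw [← Nat.card_eq_fintype_card, Nat.card_congr e]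
    exact hcardm
  have hUle : Fintype.card {x : R // IsUnit x} ≤ q ^ n := by
    rw [← hcard]; exact Fintype.card_subtype_le _
  have hU : Fintype.card {x : R // IsUnit x} = q ^ n - q ^ (n - 1) := by
    have hc := Fintype.card_subtype_compl (fun x : R => IsUnit x)
    rw [hNU, hcard] at hc
    omega
  -- the involution on units
  have key : ∀ (x : R) (hx : IsUnit x) (y : R), x * y = u ↔ y = ↑hx.unit⁻¹ * u := by
    intro x hx y
    constructor
    · intro e
      rw [← e, ← mul_assoc, IsUnit.val_inv_mul, one_mul]
    · intro e
      rw [e, ← mul_assoc, IsUnit.mul_val_inv, one_mul]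
  set σ : {x : R // IsUnit x} → {x : R // IsUnit x} :=
    fun x => ⟨↑x.2.unit⁻¹ * u, (Units.isUnit _).mul hu⟩ with hσdef
  have hσval : ∀ x : {x : R // IsUnit x}, (σ x).1 = ↑x.2.unit⁻¹ * u := fun _ => rfl
  have hmul : ∀ x y : {x : R // IsUnit x}, (x.1 * y.1 = u ↔ y = σ x) := by
    intro x y
    rw [Subtype.ext_iff, hσval]
    exact key x.1 x.2 y.1
  have hσ : Function.Involutive σ := by
    intro x
    have h1 : (σ x).1 * x.1 = u := by
      rw [hσval]
      calc ↑x.2.unit⁻¹ * u * x.1 = u * (↑x.2.unit⁻¹ * x.1) := by ring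
        _ = u := by rw [IsUnit.val_inv_mul, mul_one]
    exact ((hmul (σ x) x).mp h1).symm
  -- fixed points
  have hfix_iff : ∀ x : {x : R // IsUnit x}, σ x = x ↔ x.1 * x.1 = u := by
    intro x
    exact ⟨fun h => (hmul x x).mpr h.symm, fun h => ((hmul x x).mp h).symm⟩
  have hss : s * s = u := by rw [hs]; ring
  have hs_unit : IsUnit s := isUnit_of_mul_isUnit_left (hss ▸ hu)
  have hsol : ∀ x : R, x * x = u → x = s ∨ x = -s := by
    intro x hx
    have hxu : IsUnit x := isUnit_of_mul_isUnit_left (hx ▸ hu)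
    have hfac : (x - s) * (x + s) = 0 := by
      have e : (x - s) * (x + s) = x * x - s * s := by ring
      rw [e, hx, hss, sub_self]
    have h2x : IsUnit ((x - s) + (x + s)) := by
      have e : (x - s) + (x + s) = 2 * x := by ring
      rw [e]; exact h2.mul hxu
    rcases IsLocalRing.isUnit_or_isUnit_of_isUnit_add h2x with hx1 | hx1
    · right
      have := (IsUnit.mul_right_eq_zero hx1).mp hfac
      exact eq_neg_of_add_eq_zero_left this
    · left
      have := (IsUnit.mul_left_eq_zero hx1).mp hfac
      exact sub_eq_zero.mp this
  have hsne : s ≠ -s := by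
    intro e
    have h2s : IsUnit ((2 : R) * s) := h2.mul hs_unit
    have : (2 : R) * s = 0 := by
      rw [two_mul]
      nth_rewrite 2 [e]
      ring
    rw [this] at h2s
    exact not_isUnit_zero h2s
  have hFcard : Fintype.card {x : {x : R // IsUnit x} // σ x = x} = 2 := by
    rw [← Nat.card_eq_fintype_card, Nat.card_eq_two_iff]
    refine ⟨⟨⟨s, hs_unit⟩, (hfix_iff _).mpr hss⟩,
      ⟨⟨-s, hs_unit.neg⟩, (hfix_iff _).mpr (by rw [neg_mul_neg, hss])⟩,
      fun e => hsne (congrArg (fun z => z.1.1) e), ?_⟩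
    apply Set.eq_univ_iff_forall.mpr
    intro z
    rcases hsol z.1.1 ((hfix_iff z.1).mp z.2) with hc | hc
    · exact Set.mem_insert_iff.mpr (Or.inl (Subtype.ext (Subtype.ext hc)))
    · exact Set.mem_insert_iff.mpr (Or.inr (Subtype.ext (Subtype.ext hc)))
  -- apply invDet
  obtain ⟨T, hT, hdet⟩ := invDet (q ^ n - q ^ (n - 1)) {x : R // IsUnit x} hU σ hσ lam
  rw [hFcard] at hT hdet
  -- matrix decomposition
  have hsub : ((Matrix.of fun x y : R => if x * y = u then (1 : ℝ) else 0)
        - lam • 1).submatrix (Equiv.sumCompl IsUnit) (Equiv.sumCompl IsUnit)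
      = Matrix.fromBlocks
          (Matrix.of fun x y : {x : R // IsUnit x} =>
            (if y = σ x then (1:ℝ) else 0) - (if x = y then lam else 0)) 0 0
          ((-lam) • (1 : Matrix {x : R // ¬ IsUnit x} {x : R // ¬ IsUnit x} ℝ)) := by
    ext i j
    cases i with
    | inl i =>
      cases j with
      | inl j =>
        simp only [Matrix.submatrix_apply, Equiv.sumCompl_apply_inl,
          Matrix.sub_apply, Matrix.of_apply, Matrix.smul_apply, Matrix.one_apply,
          Matrix.fromBlocks_apply₁₁, smul_eq_mul, mul_ite, mul_one, mul_zero]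
        congr 1
        · exact if_congr (hmul i j) rfl rfl
        · exact if_congr Subtype.coe_inj rfl rfl
      | inr j =>
        have h1 : ¬ (i : R) * (j : R) = u := fun e => j.2 (isUnit_of_mul_isUnit_right (e ▸ hu))
        have h2' : ¬ (i : R) = (j : R) := fun e => j.2 (e ▸ i.2)
        simp [h1, h2', Matrix.one_apply]
    | inr i =>
      cases j with
      | inl j =>
        have h1 : ¬ (i : R) * (j : R) = u := fun e => i.2 (isUnit_of_mul_isUnit_left (e ▸ hu))
        have h2' : ¬ (i : R) = (j : R) := fun e => i.2 (by rw [e]; exact j.2)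
        simp [h1, h2', Matrix.one_apply]
      | inr j =>
        have h1 : ¬ (i : R) * (j : R) = u := fun e => i.2 (isUnit_of_mul_isUnit_left (e ▸ hu))
        rcases eq_or_ne i j with rfl | hij
        · simp [h1, Matrix.one_apply]
        · have hij' : ¬ (i : R) = (j : R) := fun e => hij (Subtype.ext e)
          simp [h1, hij, hij', Matrix.one_apply]
  rw [← Matrix.det_submatrix_equiv_self (Equiv.sumCompl IsUnit), hsub,
    Matrix.det_fromBlocks_zero₁₂, hdet, Matrix.det_smul, Matrix.det_one, hNU]
  -- final arithmetic
  have hodd : Odd (q ^ (n - 1)) := hq.pow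
  have hq1 : 1 ≤ q ^ (n - 1) := Nat.one_le_iff_ne_zero.mpr (pow_ne_zero _ hq0)
  have he1 : (q ^ n - q ^ (n - 1) + 2) / 2 = T + 2 := by omega
  have he2 : (q ^ n - q ^ (n - 1) - 2) / 2 = T := by omega
  rw [he1, he2, Odd.neg_pow hodd, mul_one]
  have hfac : (lam ^ 2 - 1) ^ T = (lam - 1) ^ T * (lam + 1) ^ T := by
    rw [← mul_pow]
    congr 1
    ring
  rw [hfac]
  ring
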